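/- Polyline vertices and nested faces for a linear connection: in the setting of the explicit Moreau data for a linear connection (V, Π, f_0 as computed there), assume the chains are labeled so that ρ̃_0 < ρ̃_1 < ⋯ < ρ̃_{S−1} with ρ̃_n = r̃_n/ã_n, and that for each n the minimum threshold of chain n is attained only at the edge (1, i_n+1), i.e. r̃_n = r_{1,i_n+1} < min of the thresholds of the other edges of chain n. Let Π_j = {v ∈ Π : √(a_{1,i_{j−1}+1}) v_{1,i_{j−1}+1} = r_{1,i_{j−1}+1}} for j = 1, …, S, and define B_0 = 0 and, for j = 1, …, S, the points B_j ∈ V whose components along chain n satisfy √(a_e) B_j^e = ã_n · min{ρ̃_n, ρ̃_{j−1}} for every edge e of chain n. Then B_j lies in the relative interior of Π_1 ∩ ⋯ ∩ Π_j for j = 1, …, S, and the faces F_j = V ∩ Π_1 ∩ ⋯ ∩ Π_j of the parallelepiped Π ∩ V satisfy F_{S−1} ⊆ F_{S−2} ⊆ ⋯ ⊆ F_0 = Π ∩ V and dim F_{j−1} − dim F_j = 1 for j = 1, …, S−1. -/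

import Mathlib

open MeasureTheory Set

noncomputable section

/-- Edges of a linear connection: chain `n` has `c n + 2` edges, edge `⟨n,0⟩`
is the edge `(1, i_n+1)` and edge `⟨n, c n + 1⟩` is the edge `(i_{n+1}, N)`. -/
def LCEdge (S : ℕ) (c : Fin S → ℕ) : Type := Σ n : Fin S, Fin (c n + 2)

instance (S : ℕ) (c : Fin S → ℕ) : Fintype (LCEdge S c) := by unfold LCEdge; infer_instance

/-- The configuration space `E = ℝ^M` of a linear connection. -/
def LCSp (S : ℕ) (c : Fin S → ℕ) : Type := EuclideanSpace ℝ (LCEdge S c)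

instance (S : ℕ) (c : Fin S → ℕ) : NormedAddCommGroup (LCSp S c) := by
  unfold LCSp; infer_instance

instance (S : ℕ) (c : Fin S → ℕ) : InnerProductSpace ℝ (LCSp S c) := by
  unfold LCSp; infer_instance

instance (S : ℕ) (c : Fin S → ℕ) : CoeFun (LCSp S c) (fun _ => LCEdge S c → ℝ) :=
  ⟨fun v => WithLp.ofLp v⟩

/-- Diagonal rescaling map `v ↦ (w e * v e)_e`. -/
def dmulLC {S : ℕ} {c : Fin S → ℕ} (w : LCEdge S c → ℝ) :
    LCSp S c →ₗ[ℝ] LCSp S c where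
  toFun v := WithLp.toLp 2 (fun e => w e * v e)
  map_add' x y := WithLp.ofLp_injective 2 <| funext fun e => by
    show w e * (x e + y e) = w e * x e + w e * y e; ring
  map_smul' m x := WithLp.ofLp_injective 2 <| funext fun e => by
    show w e * (m * x e) = m * (w e * x e); ring

/-- The subspace `W` of deformations compatible with the geometric constraints
(at zero input): the sum of deformations along each chain is zero. -/
def WLC (S : ℕ) (c : Fin S → ℕ) : Submodule ℝ (LCSp S c) where
  carrier := {ε | ∀ n : Fin S, ∑ j : Fin (c n + 2), ε ⟨n, j⟩ = 0}
  zero_mem' := fun n => by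
    have : ∀ j : Fin (c n + 2), (0 : LCSp S c) ⟨n, j⟩ = 0 := fun j => rfl
    simp [this]
  add_mem' := by
    intro a b ha hb n
    have : ∀ j : Fin (c n + 2), (a + b) (⟨n, j⟩ : LCEdge S c) = a ⟨n, j⟩ + b ⟨n, j⟩ :=
      fun j => rfl
    simp [this, Finset.sum_add_distrib, ha n, hb n]
  smul_mem' := by
    intro m a ha n
    have : ∀ j : Fin (c n + 2), (m • a) (⟨n, j⟩ : LCEdge S c) = m * a ⟨n, j⟩ :=
      fun j => rfl
    simp [this, ← Finset.mul_sum, ha n]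

/-- The subspace `V = A^{-1/2} W^⊥`. -/
def VLC {S : ℕ} {c : Fin S → ℕ} (a : LCEdge S c → ℝ) : Submodule ℝ (LCSp S c) :=
  (WLC S c)ᗮ.map (dmulLC fun e => (Real.sqrt (a e))⁻¹)

/-- The box `C` of admissible stresses. -/
def CboxLC {S : ℕ} {c : Fin S → ℕ} (r : LCEdge S c → ℝ) : Set (LCSp S c) :=
  {σ | ∀ e, |σ e| ≤ r e}

/-- The rescaled polytope `Π = A^{-1/2} C`. -/
def PiLC {S : ℕ} {c : Fin S → ℕ} (a r : LCEdge S c → ℝ) : Set (LCSp S c) :=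
  (dmulLC fun e => (Real.sqrt (a e))⁻¹) '' CboxLC r

/-- The vector `k₀`: component `1` on the edges `(i_n, N)` (the last edge of
each chain), `0` elsewhere. -/
def k0LC (S : ℕ) (c : Fin S → ℕ) : LCSp S c := WithLp.toLp 2 fun e : LCEdge S c =>
  if (e.2 : ℕ) = c e.1 + 1 then (1 : ℝ) else 0

/-- Effective stiffness `ã_n` of chain `n`. -/
def atilLC {S : ℕ} {c : Fin S → ℕ} (a : LCEdge S c → ℝ) (n : Fin S) : ℝ :=
  (∑ j : Fin (c n + 2), (a ⟨n, j⟩)⁻¹)⁻¹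

/-- Effective threshold `r̃_n` of chain `n`. -/
def rtilLC {S : ℕ} {c : Fin S → ℕ} (r : LCEdge S c → ℝ) (n : Fin S) : ℝ :=
  Finset.univ.inf' ⟨⟨0, by omega⟩, Finset.mem_univ _⟩ fun j : Fin (c n + 2) => r ⟨n, j⟩

/-- The facet `Π_n` of `Π` on which the first edge of chain `n` is at its
positive threshold. -/
def PfaceLC {S : ℕ} {c : Fin S → ℕ} (a r : LCEdge S c → ℝ) (n : Fin S) :
    Set (LCSp S c) :=
  {v ∈ PiLC a r | Real.sqrt (a ⟨n, 0⟩) * v ⟨n, 0⟩ = r ⟨n, 0⟩}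

/-- The face `F_j = V ∩ Π_1 ∩ ⋯ ∩ Π_j` of the polytope `Π ∩ V`. -/
def FfaceLC {S : ℕ} {c : Fin S → ℕ} (a r : LCEdge S c → ℝ) (j : ℕ) :
    Set (LCSp S c) :=
  ↑(VLC a) ∩ PiLC a r ∩ ⋂ (n : Fin S) (_ : (n : ℕ) < j), PfaceLC a r n

namespace LCProofAux

instance {S : ℕ} {c : Fin S → ℕ} : DecidableEq (LCEdge S c) := by
  unfold LCEdge; infer_instance

variable {S : ℕ} {c : Fin S → ℕ} {a r : LCEdge S c → ℝ}

lemma dmul_apply (w : LCEdge S c → ℝ) (v : LCSp S c) (e : LCEdge S c) :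
    dmulLC w v e = w e * v e := rfl

lemma sqrtA_pos (ha : ∀ e, 0 < a e) (e : LCEdge S c) : 0 < Real.sqrt (a e) :=
  Real.sqrt_pos.2 (ha e)

lemma mem_PiLC (ha : ∀ e, 0 < a e) {v : LCSp S c} :
    v ∈ PiLC a r ↔ ∀ e, |Real.sqrt (a e) * v e| ≤ r e := by
  constructor
  · rintro ⟨σ, hσ, rfl⟩ e
    rw [dmul_apply, mul_inv_cancel_left₀ (sqrtA_pos ha e).ne']
    exact hσ e
  · intro h
    refine ⟨WithLp.toLp 2 (fun e => Real.sqrt (a e) * v e), h, WithLp.ofLp_injective 2 <| funext fun e => ?_⟩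
    erw [dmul_apply]
    exact inv_mul_cancel_left₀ (sqrtA_pos ha e).ne' _

lemma mem_WLC {w : LCSp S c} :
    w ∈ WLC S c ↔ ∀ n : Fin S, ∑ j : Fin (c n + 2), w ⟨n, j⟩ = 0 := Iff.rfl

lemma sigma_eq_iff {m : Fin S} {x i : Fin (c m + 2)} :
    (⟨m, x⟩ : LCEdge S c) = ⟨m, i⟩ ↔ x = i :=
  ⟨fun h => eq_of_heq (Sigma.mk.inj_iff.1 h).2, fun h => by rw [h]⟩

lemma orth_const {u : LCSp S c} (hu : u ∈ (WLC S c)ᗮ) (n : Fin S) (i : Fin (c n + 2)) :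
    u ⟨n, i⟩ = u ⟨n, 0⟩ := by

  set w : LCSp S c := WithLp.toLp 2
    (fun e' : (Σ m : Fin S, Fin (c m + 2)) => (if e' = (⟨n, i⟩ : LCEdge S c) then (1:ℝ) else 0)
      - (if e' = (⟨n, 0⟩ : LCEdge S c) then (1:ℝ) else 0)) with hw
  have hwW : w ∈ WLC S c := by
    intro m
    by_cases hm : m = n
    · subst hm
      have e1 : ∀ i' : Fin (c m + 2),
          ∑ x : Fin (c m + 2), (if (⟨m, x⟩ : LCEdge S c) = ⟨m, i'⟩ then (1:ℝ) else 0) = 1 := by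
        intro i'
        rw [Finset.sum_congr rfl fun x _ => if_congr sigma_eq_iff rfl rfl]
        simp
      show ∑ x : Fin (c m + 2), w ⟨m, x⟩ = 0
      have hterm : ∀ x : Fin (c m + 2), w ⟨m, x⟩ =
          (if (⟨m, x⟩ : LCEdge S c) = ⟨m, i⟩ then (1:ℝ) else 0)
            - (if (⟨m, x⟩ : LCEdge S c) = ⟨m, 0⟩ then (1:ℝ) else 0) := fun x => by
        simp only [hw, WithLp.ofLp_toLp]
      rw [Finset.sum_congr rfl fun x _ => hterm x, Finset.sum_sub_distrib, e1, e1, sub_self]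
    · show ∑ x : Fin (c m + 2), w ⟨m, x⟩ = 0
      refine Finset.sum_eq_zero fun x _ => ?_
      simp only [hw, WithLp.ofLp_toLp]
      rw [if_neg (fun h => hm (Sigma.mk.inj_iff.1 h).1),
        if_neg (fun h => hm (Sigma.mk.inj_iff.1 h).1), sub_self]
  have h0 := (Submodule.mem_orthogonal (WLC S c) u).1 hu w hwW
  have hsum : (∑ e : LCEdge S c, w e * u e) = 0 := by
    rw [← h0]; exact Finset.sum_congr rfl fun e _ => mul_comm _ _
  have hterm : ∀ e : (Σ m : Fin S, Fin (c m + 2)), w e * u e =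
      (if e = (⟨n, i⟩ : LCEdge S c) then u e else 0)
        - (if e = (⟨n, 0⟩ : LCEdge S c) then u e else 0) := by
    intro e
    simp only [hw, WithLp.ofLp_toLp]
    split_ifs <;> ring
  rw [Finset.sum_congr rfl fun (e : LCEdge S c) _ => hterm e, Finset.sum_sub_distrib] at hsum
  erw [Finset.sum_ite_eq' Finset.univ, Finset.sum_ite_eq' Finset.univ] at hsum
  erw [if_pos (Finset.mem_univ _), if_pos (Finset.mem_univ _)] at hsum
  linarith

lemma mem_VLC {v : LCSp S c} :
    v ∈ VLC a ↔ ∃ u ∈ (WLC S c)ᗮ, dmulLC (fun e => (Real.sqrt (a e))⁻¹) u = v :=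
  Submodule.mem_map

lemma VLC_const (ha : ∀ e, 0 < a e) {v : LCSp S c} (hv : v ∈ VLC a) (e : LCEdge S c) :
    Real.sqrt (a e) * v e = Real.sqrt (a ⟨e.1, 0⟩) * v ⟨e.1, 0⟩ := by
  obtain ⟨u, hu, rfl⟩ := mem_VLC.1 hv
  erw [dmul_apply, dmul_apply, mul_inv_cancel_left₀ (sqrtA_pos ha _).ne',
    mul_inv_cancel_left₀ (sqrtA_pos ha _).ne']
  exact orth_const hu e.1 e.2

/-- The parametrization of `V` by chain values. -/
def vv (a : LCEdge S c → ℝ) (t : Fin S → ℝ) : LCSp S c :=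
  WithLp.toLp 2 fun e => t e.1 * (Real.sqrt (a e))⁻¹

lemma sqrt_mul_vv (ha : ∀ e, 0 < a e) (t : Fin S → ℝ) (e : LCEdge S c) :
    Real.sqrt (a e) * vv a t e = t e.1 := by
  show Real.sqrt (a e) * (t e.1 * (Real.sqrt (a e))⁻¹) = t e.1
  rw [mul_comm (t e.1), mul_inv_cancel_left₀ (sqrtA_pos ha e).ne']

lemma vv_mem_VLC (t : Fin S → ℝ) : vv a t ∈ VLC a := by
  refine mem_VLC.2 ⟨WithLp.toLp 2 (fun e => t e.1), ?_,
    WithLp.ofLp_injective 2 <| funext fun e => mul_comm _ _⟩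
  refine (Submodule.mem_orthogonal _ _).2 ?_
  intro w hw
  show ∑ e : (Σ n : Fin S, Fin (c n + 2)), t e.1 * w e = 0
  rw [← Finset.univ_sigma_univ, Finset.sum_sigma]
  refine Finset.sum_eq_zero fun n _ => ?_
  show ∑ j : Fin (c n + 2), t n * w ⟨n, j⟩ = 0
  rw [← Finset.mul_sum, mem_WLC.1 hw n, mul_zero]

lemma VLC_eq_vv (ha : ∀ e, 0 < a e) {v : LCSp S c} (hv : v ∈ VLC a) :
    v = vv a (fun n => Real.sqrt (a ⟨n, 0⟩) * v ⟨n, 0⟩) := by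
  apply WithLp.ofLp_injective 2; funext e
  have h := VLC_const ha hv e
  show v e = Real.sqrt (a ⟨e.1, 0⟩) * v ⟨e.1, 0⟩ * (Real.sqrt (a e))⁻¹
  rw [← h, mul_comm (Real.sqrt (a e)) (v e), mul_inv_cancel_right₀ (sqrtA_pos ha e).ne']

lemma rtil_le (n : Fin S) (j : Fin (c n + 2)) : rtilLC r n ≤ r ⟨n, j⟩ :=
  Finset.inf'_le _ (Finset.mem_univ j)

lemma rtil_pos (hr : ∀ e, 0 < r e) (n : Fin S) : 0 < rtilLC r n := by
  unfold rtilLC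
  exact (Finset.lt_inf'_iff _).2 fun j _ => hr _

lemma abs_le_rtil {x : ℝ} {n : Fin S} (h : ∀ j : Fin (c n + 2), |x| ≤ r ⟨n, j⟩) :
    |x| ≤ rtilLC r n := by
  unfold rtilLC
  exact (Finset.le_inf'_iff _ _).2 fun j _ => h j

lemma atil_pos (ha : ∀ e, 0 < a e) (n : Fin S) : 0 < atilLC a n := by
  unfold atilLC
  exact inv_pos.2 (Finset.sum_pos (fun j _ => inv_pos.2 (ha _)) Finset.univ_nonempty)

lemma atil_mul_div (ha : ∀ e, 0 < a e) (n : Fin S) :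
    atilLC a n * (rtilLC r n / atilLC a n) = rtilLC r n := by
  rw [mul_comm]
  exact div_mul_cancel₀ _ (atil_pos ha n).ne'

/-- Coordinate hyperplanes are affine subspaces. -/
def coordAff (e0 : LCEdge S c) (t : ℝ) : AffineSubspace ℝ (LCSp S c) where
  carrier := {v | v e0 = t}
  smul_vsub_vadd_mem' := by
    intro m p1 p2 p3 h1 h2 h3
    have h1' : p1 e0 = t := h1
    have h2' : p2 e0 = t := h2
    have h3' : p3 e0 = t := h3
    show m * (p1 e0 - p2 e0) + p3 e0 = t
    rw [h1', h2', h3']; ring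

lemma affineSpan_coord {s : Set (LCSp S c)} {e0 : LCEdge S c} {t : ℝ}
    (h : ∀ u ∈ s, u e0 = t) {v : LCSp S c} (hv : v ∈ affineSpan ℝ s) : v e0 = t := by
  have hle : affineSpan ℝ s ≤ coordAff e0 t := affineSpan_le.2 fun u hu => h u hu
  exact hle hv

lemma mem_intrinsicInterior_of_isOpen {E : Type*} [NormedAddCommGroup E] [NormedSpace ℝ E]
    {s O : Set E} {x : E} (hx : x ∈ s) (hO : IsOpen O) (hxO : x ∈ O)
    (hsub : ∀ v, v ∈ O → v ∈ affineSpan ℝ s → v ∈ s) :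
    x ∈ intrinsicInterior ℝ s := by
  have hx' : x ∈ affineSpan ℝ s := subset_affineSpan ℝ s hx
  have hOsub : ((↑) ⁻¹' O : Set (affineSpan ℝ s)) ⊆ ((↑) ⁻¹' s) :=
    fun y hy => hsub y hy y.2
  have hmem : (⟨x, hx'⟩ : affineSpan ℝ s) ∈
      interior (((↑) : affineSpan ℝ s → E) ⁻¹' s) :=
    interior_maximal hOsub (hO.preimage continuous_subtype_val) hxO
  exact ⟨⟨x, hx'⟩, hmem, rfl⟩

lemma card_subtype_ge (S j : ℕ) (hj : j ≤ S) :
    Fintype.card {m : Fin S // j ≤ (m : ℕ)} = S - j := by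
  have e : {m : Fin S // j ≤ (m : ℕ)} ≃ Fin (S - j) :=
    { toFun := fun m => ⟨(m.1 : ℕ) - j, by have h1 := m.1.isLt; have h2 := m.2; omega⟩
      invFun := fun k => ⟨⟨(k : ℕ) + j, by have := k.isLt; omega⟩, by simp⟩
      left_inv := fun m => Subtype.ext (Fin.ext (by have h2 := m.2; simp; omega))
      right_inv := fun k => Fin.ext (by simp) }
  rw [Fintype.card_congr e, Fintype.card_fin]

lemma mem_Fface (ha : ∀ e, 0 < a e)
    (hmin : ∀ n : Fin S, rtilLC r n = r ⟨n, 0⟩) {j : ℕ} {v : LCSp S c} :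
    v ∈ FfaceLC a r j ↔ ∃ t : Fin S → ℝ, v = vv a t ∧ (∀ n, |t n| ≤ rtilLC r n) ∧
      (∀ n : Fin S, (n : ℕ) < j → t n = rtilLC r n) := by
  constructor
  · rintro ⟨⟨hV, hPi⟩, hface⟩
    refine ⟨fun n => Real.sqrt (a ⟨n, 0⟩) * v ⟨n, 0⟩, VLC_eq_vv ha hV, ?_, ?_⟩
    · intro n
      refine abs_le_rtil fun i => ?_
      have hc : Real.sqrt (a ⟨n, i⟩) * v ⟨n, i⟩ = Real.sqrt (a ⟨n, 0⟩) * v ⟨n, 0⟩ :=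
        VLC_const ha hV ⟨n, i⟩
      show |Real.sqrt (a ⟨n, 0⟩) * v ⟨n, 0⟩| ≤ r ⟨n, i⟩
      rw [← hc]
      exact (mem_PiLC ha).1 hPi ⟨n, i⟩
    · intro n hn
      have hf := Set.mem_iInter.1 (Set.mem_iInter.1 hface n) hn
      exact hf.2.trans (hmin n).symm
  · rintro ⟨t, rfl, hbd, hfix⟩
    have hPi : vv a t ∈ PiLC a r := (mem_PiLC ha).2 fun e => by
      rw [sqrt_mul_vv ha]
      exact le_trans (hbd e.1) (rtil_le e.1 e.2)
    refine ⟨⟨vv_mem_VLC t, hPi⟩, ?_⟩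
    refine Set.mem_iInter.2 fun n => Set.mem_iInter.2 fun hn => ?_
    refine ⟨hPi, ?_⟩
    erw [sqrt_mul_vv ha, hfix n hn]
    exact hmin n

lemma sum_apply_LC {ι : Type*} (s : Finset ι) (f : ι → LCSp S c) (e : LCEdge S c) :
    (∑ i ∈ s, f i) e = ∑ i ∈ s, f i e := by
  classical
  induction s using Finset.induction with
  | empty => rfl
  | insert _ _ h ih => rw [Finset.sum_insert h, Finset.sum_insert h, ← ih]; rfl

lemma vv_sub (t1 t2 : Fin S → ℝ) : vv a t1 - vv a t2 = vv a (t1 - t2) := by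
  apply WithLp.ofLp_injective 2; funext e
  show t1 e.1 * (Real.sqrt (a e))⁻¹ - t2 e.1 * (Real.sqrt (a e))⁻¹
      = (t1 e.1 - t2 e.1) * (Real.sqrt (a e))⁻¹
  ring

lemma vv_smul (x : ℝ) (t : Fin S → ℝ) : x • vv a t = vv a (x • t) := by
  apply WithLp.ofLp_injective 2; funext e
  show x * (t e.1 * (Real.sqrt (a e))⁻¹) = (x * t e.1) * (Real.sqrt (a e))⁻¹
  ring

lemma vv_mem_span (j : ℕ) (t : Fin S → ℝ)
    (hz : ∀ n : Fin S, (n : ℕ) < j → t n = 0) :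
    vv a t ∈ Submodule.span ℝ (Set.range fun m : {m : Fin S // j ≤ (m : ℕ)} =>
      vv a (Pi.single (m : Fin S) 1)) := by
  have hrepr : vv a t = ∑ m ∈ Finset.univ.filter (fun m : Fin S => j ≤ (m : ℕ)),
      t m • vv a (Pi.single m 1) := by
    apply WithLp.ofLp_injective 2; funext e
    rw [sum_apply_LC]
    have hterm : ∀ m : Fin S, (t m • vv a (Pi.single m 1)) e
        = if e.1 = m then t m * (Real.sqrt (a e))⁻¹ else 0 := by
      intro m
      show t m * ((Pi.single m (1:ℝ) : Fin S → ℝ) e.1 * (Real.sqrt (a e))⁻¹) = _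
      rw [Pi.single_apply]
      by_cases h : e.1 = m <;> simp [h]
    rw [Finset.sum_congr rfl fun m _ => hterm m, Finset.sum_ite_eq]
    by_cases h : (e.1 : Fin S) ∈ Finset.univ.filter (fun m : Fin S => j ≤ (m : ℕ))
    · rw [if_pos h]; rfl
    · rw [if_neg h]
      have h2 : t e.1 = 0 := by
        refine hz e.1 ?_
        simp only [Finset.mem_filter, Finset.mem_univ, true_and, not_le] at h
        exact h
      show t e.1 * (Real.sqrt (a e))⁻¹ = 0
      rw [h2, zero_mul]
  rw [hrepr]
  exact Submodule.sum_mem _ fun m hm => Submodule.smul_mem _ _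
    (Submodule.subset_span ⟨⟨m, (Finset.mem_filter.1 hm).2⟩, rfl⟩)

lemma vectorSpan_Fface (ha : ∀ e, 0 < a e) (hr : ∀ e, 0 < r e)
    (hmin : ∀ n : Fin S, rtilLC r n = r ⟨n, 0⟩) (j : ℕ) :
    vectorSpan ℝ (FfaceLC a r j) =
      Submodule.span ℝ (Set.range fun m : {m : Fin S // j ≤ (m : ℕ)} =>
        vv a (Pi.single (m : Fin S) 1)) := by
  apply le_antisymm
  · rw [vectorSpan_def, Submodule.span_le]
    rintro d hd
    rw [Set.mem_vsub] at hd
    obtain ⟨v1, h1, v2, h2, rfl⟩ := hd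
    obtain ⟨t1, rfl, hb1, hf1⟩ := (mem_Fface ha hmin).1 h1
    obtain ⟨t2, rfl, hb2, hf2⟩ := (mem_Fface ha hmin).1 h2
    have hv : (vv a t1 : LCSp S c) -ᵥ vv a t2 = vv a (t1 - t2) := vv_sub t1 t2
    rw [hv]
    refine vv_mem_span j (t1 - t2) fun n hn => ?_
    show t1 n - t2 n = 0
    rw [hf1 n hn, hf2 n hn, sub_self]
  · rw [Submodule.span_le]
    rintro d ⟨m, rfl⟩
    have hm := m.2
    set t0 : Fin S → ℝ := fun n => if (n : ℕ) < j then rtilLC r n else 0 with ht0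
    set t1 : Fin S → ℝ := fun n => if (n : ℕ) < j then rtilLC r n
        else if n = (m : Fin S) then rtilLC r n else 0 with ht1
    have hbd : ∀ t' : Fin S → ℝ, (∀ n, t' n = rtilLC r n ∨ t' n = 0) →
        ∀ n, |t' n| ≤ rtilLC r n := by
      intro t' h n
      rcases h n with h' | h'
      · rw [h', abs_of_pos (rtil_pos hr n)]
      · rw [h', abs_zero]; exact (rtil_pos hr n).le
    have h0 : vv a t0 ∈ FfaceLC a r j := (mem_Fface ha hmin).2
      ⟨t0, rfl, hbd t0 (fun n => by by_cases h : (n:ℕ) < j <;> simp [ht0, h]),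
        fun n hn => by simp [ht0, hn]⟩
    have h1 : vv a t1 ∈ FfaceLC a r j := (mem_Fface ha hmin).2
      ⟨t1, rfl, hbd t1 (fun n => by
          by_cases h : (n:ℕ) < j
          · simp [ht1, h]
          · by_cases h' : n = (m : Fin S) <;> simp [ht1, h, h']),
        fun n hn => by simp [ht1, hn]⟩
    have harg : (t1 - t0 : Fin S → ℝ) = rtilLC r (m : Fin S) • (Pi.single (m : Fin S) 1 : Fin S → ℝ) := by
      funext n
      show t1 n - t0 n = rtilLC r (m : Fin S) * (Pi.single (m : Fin S) (1:ℝ) : Fin S → ℝ) n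
      rw [Pi.single_apply]
      by_cases h : (n : ℕ) < j
      · have hnm : ¬ n = (m : Fin S) := by
          intro hEq
          rw [hEq] at h
          omega
        simp [ht0, ht1, h, hnm]
      · by_cases h' : n = (m : Fin S)
        · subst h'
          simp [ht0, ht1, h]
        · simp [ht0, ht1, h, h']
    have hdiff : (vv a t1 : LCSp S c) -ᵥ vv a t0
        = rtilLC r (m : Fin S) • vv a (Pi.single (m : Fin S) 1) := by
      rw [vv_smul]
      calc (vv a t1 : LCSp S c) -ᵥ vv a t0 = vv a (t1 - t0) := vv_sub t1 t0
        _ = vv a (rtilLC r (m : Fin S) • (Pi.single (m : Fin S) 1 : Fin S → ℝ)) := by rw [harg]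
    have hmem : rtilLC r m • vv a (Pi.single (m : Fin S) 1)
        ∈ vectorSpan ℝ (FfaceLC a r j) :=
      hdiff ▸ vsub_mem_vectorSpan ℝ h1 h0
    have hsc := Submodule.smul_mem (vectorSpan ℝ (FfaceLC a r j)) (rtilLC r m)⁻¹ hmem
    rwa [smul_smul, inv_mul_cancel₀ (rtil_pos hr m).ne', one_smul] at hsc

/-- The parametrization as a linear map. -/
def vvL (a : LCEdge S c → ℝ) : (Fin S → ℝ) →ₗ[ℝ] LCSp S c where
  toFun := vv a
  map_add' t1 t2 := WithLp.ofLp_injective 2 <| funext fun e => by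
    show (t1 e.1 + t2 e.1) * (Real.sqrt (a e))⁻¹
        = t1 e.1 * (Real.sqrt (a e))⁻¹ + t2 e.1 * (Real.sqrt (a e))⁻¹
    ring
  map_smul' x t := WithLp.ofLp_injective 2 <| funext fun e => by
    show (x * t e.1) * (Real.sqrt (a e))⁻¹ = x * (t e.1 * (Real.sqrt (a e))⁻¹)
    ring

lemma vvL_ker (ha : ∀ e, 0 < a e) : LinearMap.ker (vvL a) = ⊥ := by
  rw [LinearMap.ker_eq_bot']
  intro t ht
  funext n
  have h2 : vvL a t ⟨n, 0⟩ = (0 : LCSp S c) ⟨n, 0⟩ := by rw [ht]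
  have h3 : t n * (Real.sqrt (a ⟨n, 0⟩))⁻¹ = 0 := h2
  show t n = 0
  rcases mul_eq_zero.1 h3 with h | h
  · exact h
  · exact absurd h (inv_ne_zero (sqrtA_pos ha ⟨n, 0⟩).ne')

lemma finrank_Fface (ha : ∀ e, 0 < a e) (hr : ∀ e, 0 < r e)
    (hmin : ∀ n : Fin S, rtilLC r n = r ⟨n, 0⟩) (j : ℕ) (hj : j ≤ S) :
    Module.finrank ℝ (vectorSpan ℝ (FfaceLC a r j)) = S - j := by
  rw [vectorSpan_Fface ha hr hmin j]
  have hbase : LinearIndependent ℝ (fun n : Fin S => (Pi.single n 1 : Fin S → ℝ)) := by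
    have h := (Pi.basisFun ℝ (Fin S)).linearIndependent
    have he : ⇑(Pi.basisFun ℝ (Fin S)) = fun n : Fin S => (Pi.single n 1 : Fin S → ℝ) :=
      funext fun n => by simp
    rwa [he] at h
  have hsub : LinearIndependent ℝ
      (fun m : {m : Fin S // j ≤ (m : ℕ)} => (Pi.single (m : Fin S) 1 : Fin S → ℝ)) :=
    hbase.comp Subtype.val Subtype.val_injective
  have hli : LinearIndependent ℝ (fun m : {m : Fin S // j ≤ (m : ℕ)} =>
      vv a (Pi.single (m : Fin S) (1:ℝ))) :=
    hsub.map' (vvL a) (vvL_ker ha)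
  rw [finrank_span_eq_card hli, card_subtype_ge S j hj]


end LCProofAux


open LCProofAux

/-- Polyline vertices and nested faces for a linear connection: the vertices
`B_j` lie in the relative interiors of the corresponding intersections of
facets, and the faces `F_j = V ∩ Π_1 ∩ ⋯ ∩ Π_j` are nested with codimension
one at each step. -/
theorem linear_connection_polyline_faces
    (S : ℕ) (hS : 1 ≤ S) (c : Fin S → ℕ)
    (a r : LCEdge S c → ℝ) (ha : ∀ e, 0 < a e) (hr : ∀ e, 0 < r e)
    (hord : ∀ n m : Fin S, n < m → rtilLC r n / atilLC a n < rtilLC r m / atilLC a m)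
    (hmin : ∀ n : Fin S, rtilLC r n = r ⟨n, 0⟩ ∧
      ∀ j : Fin (c n + 2), j ≠ 0 → r ⟨n, 0⟩ < r ⟨n, j⟩)
    (B : Fin (S + 1) → LCSp S c) (hB0 : B 0 = 0)
    (hB : ∀ j : Fin (S + 1), 1 ≤ (j : ℕ) → ∀ e : LCEdge S c,
      Real.sqrt (a e) * B j e =
        atilLC a e.1 * min (rtilLC r e.1 / atilLC a e.1)
          (rtilLC r ⟨(j : ℕ) - 1, by have := j.isLt; omega⟩ /
            atilLC a ⟨(j : ℕ) - 1, by have := j.isLt; omega⟩)) :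
    (∀ j : Fin (S + 1), 1 ≤ (j : ℕ) →
      B j ∈ intrinsicInterior ℝ
        (PiLC a r ∩ ⋂ (n : Fin S) (_ : (n : ℕ) < (j : ℕ)), PfaceLC a r n)) ∧
    (FfaceLC a r 0 = ↑(VLC a) ∩ PiLC a r) ∧
    (∀ j : ℕ, 1 ≤ j → j ≤ S - 1 → FfaceLC a r j ⊆ FfaceLC a r (j - 1)) ∧
    (∀ j : ℕ, 1 ≤ j → j ≤ S - 1 →
      Module.finrank ℝ (affineSpan ℝ (FfaceLC a r (j - 1))).direction
        = Module.finrank ℝ (affineSpan ℝ (FfaceLC a r j)).direction + 1) := by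
  have hminr : ∀ n : Fin S, rtilLC r n = r ⟨n, 0⟩ := fun n => (hmin n).1
  refine ⟨?_, ?_, ?_, ?_⟩
  · -- Part 1: vertices in relative interiors
    intro j hj1
    obtain ⟨j', hj'val, hBj⟩ : ∃ j' : Fin S, (j' : ℕ) = (j : ℕ) - 1 ∧
        ∀ e : LCEdge S c, Real.sqrt (a e) * B j e = atilLC a e.1 *
          min (rtilLC r e.1 / atilLC a e.1) (rtilLC r j' / atilLC a j') :=
      ⟨_, rfl, hB j hj1⟩
    have hrpos : ∀ n : Fin S, 0 < rtilLC r n / atilLC a n :=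
      fun n => div_pos (rtil_pos hr n) (atil_pos ha n)
    have hvpos : ∀ n : Fin S,
        0 < atilLC a n * min (rtilLC r n / atilLC a n) (rtilLC r j' / atilLC a j') :=
      fun n => mul_pos (atil_pos ha n) (lt_min (hrpos n) (hrpos j'))
    have hvle : ∀ n : Fin S,
        atilLC a n * min (rtilLC r n / atilLC a n) (rtilLC r j' / atilLC a j')
          ≤ rtilLC r n := by
      intro n
      calc atilLC a n * min (rtilLC r n / atilLC a n) (rtilLC r j' / atilLC a j')
          ≤ atilLC a n * (rtilLC r n / atilLC a n) :=
            mul_le_mul_of_nonneg_left (min_le_left _ _) (atil_pos ha n).le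
        _ = rtilLC r n := atil_mul_div ha n
    have hveq : ∀ n : Fin S, (n : ℕ) < (j : ℕ) →
        atilLC a n * min (rtilLC r n / atilLC a n) (rtilLC r j' / atilLC a j')
          = rtilLC r n := by
      intro n hn
      have hle : rtilLC r n / atilLC a n ≤ rtilLC r j' / atilLC a j' := by
        rcases lt_or_eq_of_le (show (n : ℕ) ≤ (j' : ℕ) by omega) with h | h
        · exact (hord n j' (by rw [Fin.lt_def]; exact h)).le
        · rw [show n = j' from Fin.ext h]
      rw [min_eq_left hle]
      exact atil_mul_div ha n
    have hvlt : ∀ n : Fin S, ¬ ((n : ℕ) < (j : ℕ)) →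
        atilLC a n * min (rtilLC r n / atilLC a n) (rtilLC r j' / atilLC a j')
          < rtilLC r n := by
      intro n hn
      have hlt : rtilLC r j' / atilLC a j' < rtilLC r n / atilLC a n :=
        hord j' n (by rw [Fin.lt_def]; omega)
      rw [min_eq_right hlt.le]
      calc atilLC a n * (rtilLC r j' / atilLC a j')
          < atilLC a n * (rtilLC r n / atilLC a n) :=
            mul_lt_mul_of_pos_left hlt (atil_pos ha n)
        _ = rtilLC r n := atil_mul_div ha n
    have hBPi : B j ∈ PiLC a r := (mem_PiLC ha).2 fun e => by
      rw [hBj e, abs_of_pos (hvpos e.1)]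
      exact (hvle e.1).trans (rtil_le e.1 e.2)
    have hface : ∀ n : Fin S, (n : ℕ) < (j : ℕ) →
        Real.sqrt (a ⟨n, 0⟩) * B j ⟨n, 0⟩ = r ⟨n, 0⟩ := by
      intro n hn
      have h1 : Real.sqrt (a ⟨n, 0⟩) * B j ⟨n, 0⟩ = atilLC a n *
          min (rtilLC r n / atilLC a n) (rtilLC r j' / atilLC a j') := hBj ⟨n, 0⟩
      rw [h1, hveq n hn]
      exact hminr n
    have hBQ : B j ∈ PiLC a r ∩ ⋂ (n : Fin S) (_ : (n : ℕ) < (j : ℕ)), PfaceLC a r n :=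
      ⟨hBPi, Set.mem_iInter.2 fun n => Set.mem_iInter.2 fun hn => ⟨hBPi, hface n hn⟩⟩
    have hOopen : IsOpen {v : LCSp S c | ∀ e : LCEdge S c,
        ¬((e.2 : ℕ) = 0 ∧ (e.1 : ℕ) < (j : ℕ)) → |Real.sqrt (a e) * v e| < r e} := by
      have hrw : {v : LCSp S c | ∀ e : LCEdge S c,
          ¬((e.2 : ℕ) = 0 ∧ (e.1 : ℕ) < (j : ℕ)) → |Real.sqrt (a e) * v e| < r e}
          = ⋂ e : LCEdge S c, {v : LCSp S c |
            ¬((e.2 : ℕ) = 0 ∧ (e.1 : ℕ) < (j : ℕ)) → |Real.sqrt (a e) * v e| < r e} := by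
        ext v
        simp only [Set.mem_setOf_eq, Set.mem_iInter]
      rw [hrw]
      refine isOpen_iInter_of_finite fun e => ?_
      by_cases hc : ((e.2 : ℕ) = 0 ∧ (e.1 : ℕ) < (j : ℕ))
      · have : {v : LCSp S c |
            ¬((e.2 : ℕ) = 0 ∧ (e.1 : ℕ) < (j : ℕ)) → |Real.sqrt (a e) * v e| < r e}
            = Set.univ := by
          ext v; simp [hc]
        rw [this]; exact isOpen_univ
      · have : {v : LCSp S c |
            ¬((e.2 : ℕ) = 0 ∧ (e.1 : ℕ) < (j : ℕ)) → |Real.sqrt (a e) * v e| < r e}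
            = {v : LCSp S c | |Real.sqrt (a e) * v e| < r e} := by
          ext v; exact ⟨fun h => h hc, fun h _ => h⟩
        rw [this]
        have hproj : Continuous fun v : LCSp S c => v e :=
          (EuclideanSpace.proj (𝕜 := ℝ) (ι := LCEdge S c) e).continuous
        exact isOpen_lt ((continuous_const.mul hproj).abs) continuous_const
    have hBO : B j ∈ {v : LCSp S c | ∀ e : LCEdge S c,
        ¬((e.2 : ℕ) = 0 ∧ (e.1 : ℕ) < (j : ℕ)) → |Real.sqrt (a e) * v e| < r e} := by
      intro e hc
      rw [hBj e, abs_of_pos (hvpos e.1)]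
      by_cases h1 : (e.1 : ℕ) < (j : ℕ)
      · have h2 : (e.2 : ℕ) ≠ 0 := fun h => hc ⟨h, h1⟩
        have h3 : e.2 ≠ (0 : Fin (c e.1 + 2)) := fun h => h2 (by rw [h]; rfl)
        calc atilLC a e.1 * min (rtilLC r e.1 / atilLC a e.1) (rtilLC r j' / atilLC a j')
            = rtilLC r e.1 := hveq e.1 h1
          _ = r ⟨e.1, 0⟩ := hminr e.1
          _ < r ⟨e.1, e.2⟩ := (hmin e.1).2 e.2 h3
      · exact (hvlt e.1 h1).trans_le (rtil_le e.1 e.2)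
    have hsub : ∀ v, v ∈ {v : LCSp S c | ∀ e : LCEdge S c,
        ¬((e.2 : ℕ) = 0 ∧ (e.1 : ℕ) < (j : ℕ)) → |Real.sqrt (a e) * v e| < r e} →
        v ∈ affineSpan ℝ
          (PiLC a r ∩ ⋂ (n : Fin S) (_ : (n : ℕ) < (j : ℕ)), PfaceLC a r n) →
        v ∈ PiLC a r ∩ ⋂ (n : Fin S) (_ : (n : ℕ) < (j : ℕ)), PfaceLC a r n := by
      intro v hvO hvspan
      have hcoord : ∀ n : Fin S, (n : ℕ) < (j : ℕ) →
          v ⟨n, 0⟩ = r ⟨n, 0⟩ * (Real.sqrt (a ⟨n, 0⟩))⁻¹ := by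
        intro n hn
        refine affineSpan_coord (fun u hu => ?_) hvspan
        have hu2 := Set.mem_iInter.1 (Set.mem_iInter.1 hu.2 n) hn
        have h4 : Real.sqrt (a ⟨n, 0⟩) * u ⟨n, 0⟩ = r ⟨n, 0⟩ := hu2.2
        rw [← h4, mul_comm (Real.sqrt (a ⟨n, 0⟩)) (u ⟨n, 0⟩),
          mul_inv_cancel_right₀ (sqrtA_pos ha ⟨n, 0⟩).ne']
      have hsq : ∀ n : Fin S, (n : ℕ) < (j : ℕ) →
          Real.sqrt (a ⟨n, 0⟩) * v ⟨n, 0⟩ = r ⟨n, 0⟩ := by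
        intro n hn
        rw [hcoord n hn, mul_comm (r ⟨n, 0⟩),
          mul_inv_cancel_left₀ (sqrtA_pos ha ⟨n, 0⟩).ne']
      have hvPi : v ∈ PiLC a r := (mem_PiLC ha).2 fun e => by
        by_cases hc : ((e.2 : ℕ) = 0 ∧ (e.1 : ℕ) < (j : ℕ))
        · obtain ⟨n, i⟩ := e
          obtain ⟨hc1, hc2⟩ := hc
          have hi : i = 0 := by
            apply Fin.ext
            simpa using hc1
          subst hi
          rw [hsq n hc2, abs_of_pos (hr ⟨n, 0⟩)]
        · exact (hvO e hc).le
      exact ⟨hvPi, Set.mem_iInter.2 fun n => Set.mem_iInter.2 fun hn => ⟨hvPi, hsq n hn⟩⟩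
    exact mem_intrinsicInterior_of_isOpen hBQ hOopen hBO hsub
  · -- Part 2
    unfold FfaceLC
    have h0 : (⋂ (n : Fin S) (_ : (n : ℕ) < 0), PfaceLC a r n) = Set.univ := by
      simp
    rw [h0, Set.inter_univ]
  · -- Part 3
    intro j hj1 hjS v hv
    exact ⟨hv.1, Set.mem_iInter.2 fun n => Set.mem_iInter.2 fun hn =>
      Set.mem_iInter.1 (Set.mem_iInter.1 hv.2 n) (by omega)⟩
  · -- Part 4
    intro j hj1 hjS
    rw [direction_affineSpan, direction_affineSpan,
      finrank_Fface ha hr hminr (j - 1) (by omega), finrank_Fface ha hr hminr j (by omega)]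
    omega

end
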